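/- Let (A_n, B_n)_{n ≥ n_0} be a process on pairs of positive integers, adapted to a filtration (F_n), with deterministic start (A_{n_0}, B_{n_0}) = (a, b), such that almost surely (A_{n+1}, B_{n+1}) ∈ {(A_n + 1, B_n), (A_n, B_n + 1)} and P(A_{n+1} = A_n + 1 | F_n) = A_n/(A_n + B_n) for every n ≥ n_0. Then almost surely the set {n ≥ n_0 : A_n = B_n} is finite. -/

import Mathlib

open MeasureTheory ProbabilityTheory Filter
open scoped ENNReal NNReal

noncomputable def polyaPhi (A B : ℕ) : ℝ :=
  4 * (Nat.factorial (A + B - 1)) /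
    ((Nat.factorial (A - 1)) * (Nat.factorial (B - 1)) * 2 ^ (A + B))

lemma polyaPhi_nonneg (A B : ℕ) : 0 ≤ polyaPhi A B := by
  unfold polyaPhi; positivity

lemma polyaPhi_le (A B N : ℕ) (h : A + B ≤ N) :
    polyaPhi A B ≤ 4 * Nat.factorial N := by
  unfold polyaPhi
  have h1 : (1:ℝ) ≤ (Nat.factorial (A-1) : ℝ) := by exact_mod_cast Nat.factorial_pos _
  have h2 : (1:ℝ) ≤ (Nat.factorial (B-1) : ℝ) := by exact_mod_cast Nat.factorial_pos _
  have h3 : (1:ℝ) ≤ (2:ℝ) ^ (A+B) := one_le_pow₀ one_le_two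
  have hd : (1:ℝ) ≤ (Nat.factorial (A-1) : ℝ) * (Nat.factorial (B-1)) * 2 ^ (A + B) :=
    calc (1:ℝ) = 1 * 1 * 1 := by ring
      _ ≤ (Nat.factorial (A-1) : ℝ) * (Nat.factorial (B-1)) * 2 ^ (A + B) := by
          gcongr
  have hnum : (Nat.factorial (A+B-1) : ℝ) ≤ Nat.factorial N := by
    exact_mod_cast Nat.factorial_le (by omega)
  calc 4 * (Nat.factorial (A + B - 1) : ℝ) / ((Nat.factorial (A-1) : ℝ) * (Nat.factorial (B-1)) * 2 ^ (A + B))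
      ≤ 4 * (Nat.factorial (A + B - 1) : ℝ) := div_le_self (by positivity) hd
    _ ≤ 4 * Nat.factorial N := by linarith

lemma polyaPhi_eq (A B n : ℕ) (hn : A + B = n + 2) :
    polyaPhi A B = 4 * (Nat.factorial (n+1)) /
      ((Nat.factorial (A-1)) * (Nat.factorial (B-1)) * 2 ^ (n+2)) := by
  unfold polyaPhi
  rw [show A + B - 1 = n + 1 by omega, hn]

lemma polyaPhi_rec (p q : ℕ) :
    polyaPhi (p+1) (q+2) + (polyaPhi (p+2) (q+1) - polyaPhi (p+1) (q+2)) *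
      (((p:ℝ)+1) / (((p:ℝ)+1) + ((q:ℝ)+1))) = polyaPhi (p+1) (q+1) := by
  rw [polyaPhi_eq (p+1) (q+2) (p+q+1) (by omega), polyaPhi_eq (p+2) (q+1) (p+q+1) (by omega),
      polyaPhi_eq (p+1) (q+1) (p+q) (by omega)]
  rw [show p+1-1 = p by omega, show q+2-1 = q+1 by omega, show p+2-1 = p+1 by omega,
      show q+1-1 = q by omega]
  have f1 : (Nat.factorial (p+q+1+1) : ℝ) = (p+q+2) * Nat.factorial (p+q+1) := by
    rw [Nat.factorial_succ]; push_cast; ring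
  have f2 : (Nat.factorial (p+1) : ℝ) = (p+1) * Nat.factorial p := by
    rw [Nat.factorial_succ]; push_cast; ring
  have f3 : (Nat.factorial (q+1) : ℝ) = (q+1) * Nat.factorial q := by
    rw [Nat.factorial_succ]; push_cast; ring
  rw [show p+q+1+2 = (p+q+2)+1 by omega, show p+q+1+1 = (p+q+1)+1 by omega] at *
  rw [f1, f2, f3, pow_succ]
  have hp : (0:ℝ) < Nat.factorial p := by exact_mod_cast Nat.factorial_pos p
  have hq : (0:ℝ) < Nat.factorial q := by exact_mod_cast Nat.factorial_pos q
  have h2 : (0:ℝ) < (2:ℝ) ^ (p+q+2) := by positivity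
  have hpq : (0:ℝ) < ((p:ℝ)+1) + ((q:ℝ)+1) := by positivity
  field_simp
  ring

lemma polyaPhi_diag_succ (j : ℕ) :
    polyaPhi (j+2) (j+2) = polyaPhi (j+1) (j+1) * ((2*(j:ℝ)+3) / (2*(j:ℝ)+2)) := by
  rw [polyaPhi_eq (j+2) (j+2) (2*j+2) (by omega), polyaPhi_eq (j+1) (j+1) (2*j) (by omega)]
  rw [show j+2-1 = j+1 by omega, show j+1-1 = j by omega]
  have f1 : (Nat.factorial (2*j+2+1) : ℝ) = (2*j+3) * ((2*j+2) * Nat.factorial (2*j+1)) := by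
    rw [show 2*j+2+1 = (2*j+2)+1 by omega, Nat.factorial_succ,
        show 2*j+2 = (2*j+1)+1 by omega, Nat.factorial_succ]
    push_cast; ring
  have f2 : (Nat.factorial (j+1) : ℝ) = (j+1) * Nat.factorial j := by
    rw [Nat.factorial_succ]; push_cast; ring
  rw [show 2*j+2+2 = (2*j+2)+2 by omega, show 2*j+0+1 = 2*j+1 by omega, f1, f2,
      show (2*j+2)+2 = ((2*j+2)+1)+1 by omega, pow_succ, pow_succ,
      show (2*j+2) = (2*j)+2 by omega, pow_add]
  have hj : (0:ℝ) < Nat.factorial j := by exact_mod_cast Nat.factorial_pos j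
  have h2 : (0:ℝ) < (2:ℝ) ^ (2*j) := by positivity
  field_simp

lemma polyaPhi_one_one : polyaPhi 1 1 = 1 := by
  unfold polyaPhi
  norm_num [Nat.factorial]

lemma polyaPhi_diag_ge (k : ℕ) (hk : 1 ≤ k) :
    1 + (∑ j ∈ Finset.range (k-1), (1/((j:ℝ)+1)))/2 ≤ polyaPhi k k := by
  induction k, hk using Nat.le_induction with
  | base => simp [polyaPhi_one_one]
  | succ m hm ih =>
    obtain ⟨j, rfl⟩ : ∃ j, m = j + 1 := ⟨m - 1, by omega⟩
    rw [show j+1+1 = j+2 from rfl, polyaPhi_diag_succ j]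
    rw [show j+1-1 = j by omega] at ih
    rw [show j+2-1 = j+1 by omega, Finset.sum_range_succ]
    have hpos : (0:ℝ) < 2*(j:ℝ)+2 := by positivity
    have hφ : (1:ℝ) ≤ polyaPhi (j+1) (j+1) := by
      have : (0:ℝ) ≤ (∑ i ∈ Finset.range j, (1/((i:ℝ)+1)))/2 := by positivity
      linarith
    have heq : polyaPhi (j+1) (j+1) * ((2*(j:ℝ)+3) / (2*(j:ℝ)+2))
        = polyaPhi (j+1) (j+1) + polyaPhi (j+1) (j+1) / (2*(j:ℝ)+2) := by
      field_simp; ring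
    have h1 : (1:ℝ)/(2*(j:ℝ)+2) ≤ polyaPhi (j+1) (j+1) / (2*(j:ℝ)+2) := by gcongr
    have h2 : (1:ℝ)/(2*(j:ℝ)+2) = (1/((j:ℝ)+1))/2 := by
      rw [div_div]; ring_nf
    linarith

lemma polyaPhi_diag_tendsto : Tendsto (fun k : ℕ => polyaPhi k k) atTop atTop := by
  have h0 := Real.tendsto_sum_range_one_div_nat_succ_atTop
  have h1 : Tendsto (fun k : ℕ => ∑ j ∈ Finset.range (k-1), (1/((j:ℝ)+1))) atTop atTop := by
    have := h0.comp (tendsto_sub_atTop_nat 1)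
    simpa [Function.comp_def] using this
  have h2 : Tendsto (fun k : ℕ => 1 + (∑ j ∈ Finset.range (k-1), (1/((j:ℝ)+1)))/2) atTop atTop :=
    tendsto_atTop_add_const_left _ 1 (h1.atTop_div_const two_pos)
  refine tendsto_atTop_mono' atTop ?_ h2
  filter_upwards [eventually_ge_atTop 1] with k hk using polyaPhi_diag_ge k hk

theorem polya_walk_equal_finitely_often
    {Ω : Type} {mΩ : MeasurableSpace Ω} (μ : @Measure Ω mΩ)
    (hprob : IsProbabilityMeasure μ)
    (n₀ : ℕ) (F : @Filtration Ω ℕ _ mΩ)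
    (A B : ℕ → Ω → ℕ) (a b : ℕ) (ha : 0 < a) (hb : 0 < b)
    (hstart : ∀ ω, A n₀ ω = a ∧ B n₀ ω = b)
    (hA_adapted : ∀ n, Measurable[F n] (A n))
    (hB_adapted : ∀ n, Measurable[F n] (B n))
    (hstep : ∀ᵐ ω ∂μ, ∀ n, n₀ ≤ n →
      (A (n + 1) ω = A n ω + 1 ∧ B (n + 1) ω = B n ω) ∨
      (A (n + 1) ω = A n ω ∧ B (n + 1) ω = B n ω + 1))
    (hlaw : ∀ n, n₀ ≤ n →
      MeasureTheory.condExp (α := Ω) (E := ℝ) (F n) (m₀ := mΩ) μ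
          (fun ω => if A (n + 1) ω = A n ω + 1 then (1 : ℝ) else 0)
        =ᵐ[μ] fun ω => (A n ω : ℝ) / ((A n ω : ℝ) + (B n ω : ℝ))) :
    ∀ᵐ ω ∂μ, {n : ℕ | n₀ ≤ n ∧ A n ω = B n ω}.Finite := by
  classical
  -- pointwise invariants on the good set
  have key : ∀ ω, (∀ n, n₀ ≤ n →
      (A (n + 1) ω = A n ω + 1 ∧ B (n + 1) ω = B n ω) ∨
      (A (n + 1) ω = A n ω ∧ B (n + 1) ω = B n ω + 1)) → ∀ n, n₀ ≤ n →
      (1 ≤ A n ω ∧ 1 ≤ B n ω ∧ A n ω + B n ω = a + b + (n - n₀)) := by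
    intro ω hω n hn
    induction n, hn using Nat.le_induction with
    | base => obtain ⟨h1, h2⟩ := hstart ω; omega
    | succ n hn ih => rcases hω n hn with ⟨h1, h2⟩ | ⟨h1, h2⟩ <;> omega
  -- measurability helpers
  have measAB : ∀ (m : ℕ) (g : ℕ → ℕ → ℝ), Measurable[F m] (fun ω => g (A m ω) (B m ω)) := by
    intro m g
    exact (measurable_of_countable (fun p : ℕ × ℕ => g p.1 p.2)).comp
      ((hA_adapted m).prodMk (hB_adapted m))
  have integrable_of_bound : ∀ (g : Ω → ℝ) (C : ℝ), Measurable g →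
      (∀ᵐ ω ∂μ, ‖g ω‖ ≤ C) → Integrable g μ :=
    fun g C hg hbd => ⟨hg.aestronglyMeasurable, HasFiniteIntegral.of_bounded hbd⟩
  -- the filtration and the martingale
  set ℱ : Filtration ℕ mΩ :=
    ⟨fun n => F (n₀ + n), fun i j hij => F.mono (by omega), fun n => F.le _⟩ with hℱ_def
  set f : ℕ → Ω → ℝ := fun n ω => polyaPhi (A (n₀ + n) ω) (B (n₀ + n) ω) with hf_def
  have hf_meas : ∀ n, Measurable (f n) := fun n =>
    (measAB (n₀ + n) polyaPhi).mono (F.le _) le_rfl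
  have hf_int : ∀ n, Integrable (f n) μ := by
    intro n
    refine integrable_of_bound _ (4 * Nat.factorial (a + b + n)) (hf_meas n) ?_
    filter_upwards [hstep] with ω hω
    obtain ⟨h1, h2, h3⟩ := key ω hω (n₀ + n) (by omega)
    rw [hf_def, Real.norm_of_nonneg (polyaPhi_nonneg _ _)]
    exact polyaPhi_le _ _ _ (by omega)
  have hadp : StronglyAdapted ℱ f := fun n => ((measAB (n₀ + n) polyaPhi).stronglyMeasurable)
  -- martingale property
  have hstep_mart : ∀ n, f n =ᵐ[μ] μ[f (n + 1)| ℱ n] := by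
    intro n
    set m : ℕ := n₀ + n with hm_def
    have hmn : n₀ ≤ m := by omega
    set X : Ω → ℝ := fun ω => if A (m + 1) ω = A m ω + 1 then (1 : ℝ) else 0 with hX_def
    set c : Ω → ℝ := fun ω => polyaPhi (A m ω) (B m ω + 1) with hc_def
    set d : Ω → ℝ := fun ω =>
      polyaPhi (A m ω + 1) (B m ω) - polyaPhi (A m ω) (B m ω + 1) with hd_def
    have hc_meas : Measurable[F m] c := measAB m (fun x y => polyaPhi x (y + 1))
    have hd_meas : Measurable[F m] d :=
      measAB m (fun x y => polyaPhi (x + 1) y - polyaPhi x (y + 1))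
    have hX_meas : Measurable X := by
      have hp : Measurable fun ω => (A (m + 1) ω, A m ω) :=
        ((hA_adapted (m + 1)).mono (F.le _) le_rfl).prodMk
          ((hA_adapted m).mono (F.le _) le_rfl)
      exact (measurable_of_countable
        (fun p : ℕ × ℕ => if p.1 = p.2 + 1 then (1 : ℝ) else 0)).comp hp
    set C : ℝ := 4 * Nat.factorial (a + b + n + 2) with hC_def
    have hbound : ∀ᵐ ω ∂μ, ‖c ω‖ ≤ C ∧ ‖d ω‖ ≤ 2 * C ∧ ‖d ω * X ω‖ ≤ 2 * C := by
      filter_upwards [hstep] with ω hω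
      obtain ⟨h1, h2, h3⟩ := key ω hω m hmn
      have hb1 : polyaPhi (A m ω) (B m ω + 1) ≤ C := polyaPhi_le _ _ _ (by omega)
      have hb2 : polyaPhi (A m ω + 1) (B m ω) ≤ C := polyaPhi_le _ _ _ (by omega)
      have n1 := polyaPhi_nonneg (A m ω) (B m ω + 1)
      have n2 := polyaPhi_nonneg (A m ω + 1) (B m ω)
      have hcb : ‖c ω‖ ≤ C := by
        rw [hc_def, Real.norm_of_nonneg n1]; exact hb1
      have hdb : ‖d ω‖ ≤ 2 * C := by
        rw [hd_def]
        calc ‖polyaPhi (A m ω + 1) (B m ω) - polyaPhi (A m ω) (B m ω + 1)‖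
            ≤ ‖polyaPhi (A m ω + 1) (B m ω)‖ + ‖polyaPhi (A m ω) (B m ω + 1)‖ := norm_sub_le _ _
          _ ≤ 2 * C := by rw [Real.norm_of_nonneg n1, Real.norm_of_nonneg n2]; linarith
      refine ⟨hcb, hdb, ?_⟩
      have hXb : ‖X ω‖ ≤ 1 := by
        rw [hX_def]; dsimp only; split <;> simp
      calc ‖d ω * X ω‖ = ‖d ω‖ * ‖X ω‖ := norm_mul _ _
        _ ≤ (2 * C) * 1 := by
            apply mul_le_mul hdb hXb (norm_nonneg _) (by positivity)
        _ = 2 * C := by ring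
    have hc_int : Integrable c μ :=
      integrable_of_bound c C (hc_meas.mono (F.le m) le_rfl) (hbound.mono fun ω h => h.1)
    have hdX_int : Integrable (d * X) μ :=
      integrable_of_bound (d * X) (2 * C)
        (((hd_meas.mono (F.le m) le_rfl)).mul hX_meas) (hbound.mono fun ω h => h.2.2)
    have hX_int : Integrable X μ :=
      integrable_of_bound X 1 hX_meas (Eventually.of_forall fun ω => by
        rw [hX_def]; dsimp only; split <;> simp)
    have h1 : f (n + 1) =ᵐ[μ] c + d * X := by
      filter_upwards [hstep] with ω hω
      have hidx : n₀ + (n + 1) = m + 1 := by omega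
      rcases hω m hmn with ⟨e1, e2⟩ | ⟨e1, e2⟩
      · simp only [hf_def, hc_def, hd_def, hX_def, Pi.add_apply, Pi.mul_apply, hidx, e1, e2]
        norm_num
      · simp only [hf_def, hc_def, hd_def, hX_def, Pi.add_apply, Pi.mul_apply, hidx, e1, e2]
        rw [if_neg (by omega)]
        ring
    have step5 : μ[X| F m] =ᵐ[μ] fun ω => (A m ω : ℝ) / ((A m ω : ℝ) + (B m ω : ℝ)) :=
      hlaw m hmn
    have chain : μ[f (n + 1)| F m] =ᵐ[μ] f n := by
      calc μ[f (n + 1)| F m] =ᵐ[μ] μ[c + d * X| F m] := condExp_congr_ae h1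
        _ =ᵐ[μ] μ[c| F m] + μ[d * X| F m] := condExp_add hc_int hdX_int _
        _ =ᵐ[μ] c + d * μ[X| F m] := by
            rw [condExp_of_stronglyMeasurable (F.le m) hc_meas.stronglyMeasurable hc_int]
            exact EventuallyEq.add EventuallyEq.rfl
              (condExp_mul_of_stronglyMeasurable_left hd_meas.stronglyMeasurable hdX_int hX_int)
        _ =ᵐ[μ] c + d * fun ω => (A m ω : ℝ) / ((A m ω : ℝ) + (B m ω : ℝ)) :=
            EventuallyEq.add EventuallyEq.rfl (EventuallyEq.mul EventuallyEq.rfl step5)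
        _ =ᵐ[μ] f n := by
            filter_upwards [hstep] with ω hω
            obtain ⟨h1', h2', h3'⟩ := key ω hω m hmn
            obtain ⟨p, hp⟩ : ∃ p, A m ω = p + 1 := ⟨A m ω - 1, by omega⟩
            obtain ⟨q, hq⟩ : ∃ q, B m ω = q + 1 := ⟨B m ω - 1, by omega⟩
            simp only [hf_def, hc_def, hd_def, Pi.add_apply, Pi.mul_apply, ← hm_def, hp, hq]
            have := polyaPhi_rec p q
            push_cast
            rw [show q + 1 + 1 = q + 2 from rfl, show p + 1 + 1 = p + 2 from rfl]
            linarith [polyaPhi_rec p q]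
    exact chain.symm
  have hmart : Martingale f ℱ μ := martingale_nat hadp hf_int hstep_mart
  -- constant expectation
  have hint_eq : ∀ n, ∫ ω, f n ω ∂μ = polyaPhi a b := by
    intro n
    induction n with
    | zero =>
      have h0 : ∀ ω, f 0 ω = polyaPhi a b := by
        intro ω
        rw [hf_def]
        simp only [Nat.add_zero, (hstart ω).1, (hstart ω).2]
      rw [show (fun ω => f 0 ω) = fun _ => polyaPhi a b from funext h0]
      simp
    | succ n ih =>
      have h := integral_condExp (m := ℱ n) (ℱ.le n) (f := f (n + 1)) (μ := μ)
      calc ∫ ω, f (n + 1) ω ∂μ = ∫ ω, (μ[f (n + 1)|ℱ n]) ω ∂μ := h.symm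
        _ = ∫ ω, f n ω ∂μ := integral_congr_ae (hstep_mart n).symm
        _ = polyaPhi a b := ih
  -- L¹ bound
  have hbdd : ∀ n, eLpNorm (f n) 1 μ ≤ ((polyaPhi a b).toNNReal : ℝ≥0∞) := by
    intro n
    rw [eLpNorm_one_eq_lintegral_enorm, ← ofReal_integral_norm_eq_lintegral_enorm (hf_int n)]
    have : ∫ ω, ‖f n ω‖ ∂μ = polyaPhi a b := by
      rw [← hint_eq n]
      exact integral_congr_ae (Eventually.of_forall fun ω =>
        Real.norm_of_nonneg (by rw [hf_def]; exact polyaPhi_nonneg _ _))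
    rw [this]
    rfl
  have hconv := hmart.submartingale.ae_tendsto_limitProcess hbdd
  -- conclusion
  filter_upwards [hstep, hconv] with ω hω hconvω
  by_contra hinf
  have hinf' : {n | n₀ ≤ n ∧ A n ω = B n ω}.Infinite := hinf
  obtain ⟨Cb, hCb⟩ := hconvω.bddAbove_range
  obtain ⟨K, hK⟩ := (tendsto_atTop_atTop.1 polyaPhi_diag_tendsto) (Cb + 1)
  have hex : ∃ n ∈ {n | n₀ ≤ n ∧ A n ω = B n ω}, n₀ + 2 * K + 2 ≤ n := by
    by_contra h
    push_neg at h
    exact hinf' (Set.Finite.subset (Set.finite_Iio (n₀ + 2 * K + 2)) fun n hn => h n hn)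
  obtain ⟨n, ⟨hn1, hn2⟩, hn3⟩ := hex
  obtain ⟨h1, h2, h3⟩ := key ω hω n hn1
  have hk : K ≤ A n ω := by omega
  have hfval : f (n - n₀) ω = polyaPhi (A n ω) (A n ω) := by
    rw [hf_def]
    simp only [show n₀ + (n - n₀) = n by omega, hn2]
  have hle : f (n - n₀) ω ≤ Cb := hCb (Set.mem_range_self _)
  have hgt := hK (A n ω) hk
  rw [hfval] at hle
  linarith
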